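/- For every 6×6 Hermitian matrix P', writing P' in 2×2 block form of 3×3 blocks as P' = [[A, B],[B*, C]] with A, C Hermitian, the inequality 4|P'|² - □' - (1/12)(tr P')² ≥ 0 holds, where □' = -(1/2)⟨A+C,A+C⟩ - (1/2)(⟨A,A⟩ + ⟨C,C⟩ + ⟨B,B*⟩ + ⟨B*,B⟩) + (tr A)² + (tr C)² + 2|tr B|² + |A+C|² and ⟨X,Y⟩ = ∑_{i,j=1}^3 X_{ij} Y_{(4-i)(4-j)}. -/

import Mathlib

open Matrix
open scoped ComplexOrder

/-- The anti-diagonal pairing `⟨X, Y⟩ = ∑ X_{ij} Y_{(4-i)(4-j)}` (1-based;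
`Fin.rev` in 0-based indexing) on `3×3` complex matrices. -/
noncomputable def apair (X Y : Matrix (Fin 3) (Fin 3) ℂ) : ℂ :=
  ∑ i, ∑ j, X i j * Y i.rev j.rev

/-- Embedding of `Fin 3` as the first three indices of `Fin 6`. -/
def lo (i : Fin 3) : Fin 6 := ⟨i.val, by have := i.isLt; omega⟩

/-- Embedding of `Fin 3` as the last three indices of `Fin 6`. -/
def hi (i : Fin 3) : Fin 6 := ⟨i.val + 3, by have := i.isLt; omega⟩

set_option maxHeartbeats 2000000 in
/-- For every `6×6` Hermitian matrix `P'` with block form `[[A, B], [B*, C]]`,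
`4|P'|² - □' - (1/12)(tr P')² ≥ 0`, where
`□' = -(1/2)⟨A+C, A+C⟩ - (1/2)(⟨A,A⟩ + ⟨C,C⟩ + ⟨B,B*⟩ + ⟨B*,B⟩)
      + (tr A)² + (tr C)² + 2|tr B|² + |A+C|²`. -/
theorem stmt18 (P : Matrix (Fin 6) (Fin 6) ℂ) (hP : P.IsHermitian)
    (A B C : Matrix (Fin 3) (Fin 3) ℂ)
    (hA : ∀ i j, A i j = P (lo i) (lo j))
    (hB : ∀ i j, B i j = P (lo i) (hi j))
    (hC : ∀ i j, C i j = P (hi i) (hi j)) :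
    0 ≤ 4 * ((∑ i, ∑ j, ‖P i j‖ ^ 2 : ℝ) : ℂ)
      - (-(1/2) * apair (A + C) (A + C)
          - (1/2) * (apair A A + apair C C + apair B Bᴴ + apair Bᴴ B)
          + A.trace ^ 2 + C.trace ^ 2
          + 2 * ((‖B.trace‖ ^ 2 : ℝ) : ℂ)
          + ((∑ i, ∑ j, ‖(A + C) i j‖ ^ 2 : ℝ) : ℂ))
      - (1/12) * P.trace ^ 2 := by
  have hsre : ∀ i j : Fin 6, (P j i).re = (P i j).re := by
    intro i j
    rw [← hP.apply i j]; simp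
  have hsim : ∀ i j : Fin 6, (P j i).im = -(P i j).im := by
    intro i j
    rw [← hP.apply i j]; simp
  have hdim : ∀ i : Fin 6, (P i i).im = 0 := by
    intro i
    have := hsim i i; linarith
  have r0 : (Fin.rev 0 : Fin 3) = 2 := rfl
  have r1 : (Fin.rev 1 : Fin 3) = 1 := rfl
  have r2 : (Fin.rev 2 : Fin 3) = 0 := rfl
  have l0 : lo 0 = 0 := rfl
  have l1 : lo 1 = 1 := rfl
  have l2 : lo 2 = 2 := rfl
  have h0 : hi 0 = 3 := rfl
  have h1 : hi 1 = 4 := rfl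
  have h2 : hi 2 = 5 := rfl
  rw [Complex.le_def]
  constructor
  · simp only [Complex.sq_norm]
    simp only [apair, Matrix.trace, Matrix.diag, Fin.sum_univ_three, Fin.sum_univ_six,
      Matrix.conjTranspose_apply, Matrix.add_apply, hA, hB, hC, r0, r1, r2, l0, l1, l2, h0, h1, h2,
      Complex.normSq_apply, pow_two,
      Complex.add_re, Complex.add_im, Complex.sub_re, Complex.sub_im, Complex.mul_re, Complex.mul_im,
      Complex.neg_re, Complex.neg_im, Complex.ofReal_re, Complex.ofReal_im,
      Complex.conj_re, Complex.conj_im, Complex.zero_re, Complex.zero_im,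
      Complex.one_re, Complex.one_im,
      Complex.div_re, Complex.div_im]
    norm_num
    simp only [hsre 0 1, hsim 0 1, hsre 0 2, hsim 0 2, hsre 0 3, hsim 0 3, hsre 0 4, hsim 0 4, hsre 0 5, hsim 0 5, hsre 1 2, hsim 1 2, hsre 1 3, hsim 1 3, hsre 1 4, hsim 1 4, hsre 1 5, hsim 1 5, hsre 2 3, hsim 2 3, hsre 2 4, hsim 2 4, hsre 2 5, hsim 2 5, hsre 3 4, hsim 3 4, hsre 3 5, hsim 3 5, hsre 4 5, hsim 4 5, hdim 0, hdim 1, hdim 2, hdim 3, hdim 4, hdim 5]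
    linarith [sq_nonneg (23 * (P 0 0).re - 13 * (P 1 1).re - (P 2 2).re - 13 * (P 3 3).re - (P 4 4).re + 5 * (P 5 5).re), sq_nonneg (6 * (P 0 1).re + 2 * (P 1 2).re - 2 * (P 3 4).re + (P 4 5).re), sq_nonneg (8 * (P 0 2).re - (P 3 5).re), sq_nonneg (6 * (P 0 3).re - 2 * (P 1 4).re - (P 2 5).re), sq_nonneg (8 * (P 0 4).re + (P 1 5).re), sq_nonneg ((P 0 5).re), sq_nonneg (106 * (P 1 1).re - 52 * (P 2 2).re - 32 * (P 3 3).re - 29 * (P 4 4).re + 7 * (P 5 5).re), sq_nonneg (16 * (P 1 2).re + 5 * (P 3 4).re - 7 * (P 4 5).re), sq_nonneg (8 * (P 1 3).re + (P 2 4).re), sq_nonneg (19 * (P 1 4).re - 7 * (P 2 5).re), sq_nonneg ((P 1 5).re), sq_nonneg (48 * (P 2 2).re + (P 3 3).re - 14 * (P 4 4).re - 35 * (P 5 5).re), sq_nonneg ((P 2 3).re), sq_nonneg ((P 2 4).re), sq_nonneg ((P 2 5).re), sq_nonneg (5 * (P 3 3).re - 6 * (P 4 4).re + (P 5 5).re),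 sq_nonneg (11 * (P 3 4).re + 7 * (P 4 5).re), sq_nonneg ((P 3 5).re), sq_nonneg ((P 4 4).re - (P 5 5).re), sq_nonneg ((P 4 5).re), sq_nonneg (6 * (P 0 1).im + 2 * (P 1 2).im - 2 * (P 3 4).im + (P 4 5).im), sq_nonneg (8 * (P 0 2).im - (P 3 5).im), sq_nonneg (6 * (P 0 3).im - 2 * (P 1 4).im - (P 2 5).im), sq_nonneg (8 * (P 0 4).im + (P 1 5).im), sq_nonneg ((P 0 5).im), sq_nonneg (16 * (P 1 2).im + 5 * (P 3 4).im - 7 * (P 4 5).im), sq_nonneg (8 * (P 1 3).im + (P 2 4).im), sq_nonneg (19 * (P 1 4).im - 7 * (P 2 5).im), sq_nonneg ((P 1 5).im), sq_nonneg ((P 2 3).im), sq_nonneg ((P 2 4).im), sq_nonneg ((P 2 5).im), sq_nonneg (11 * (P 3 4).im + 7 * (P 4 5).im), sq_nonneg ((P 3 5).im), sq_nonneg ((P 4 5).im)]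
  · simp only [Complex.sq_norm]
    simp only [apair, Matrix.trace, Matrix.diag, Fin.sum_univ_three, Fin.sum_univ_six,
      Matrix.conjTranspose_apply, Matrix.add_apply, hA, hB, hC, r0, r1, r2, l0, l1, l2, h0, h1, h2,
      Complex.normSq_apply, pow_two,
      Complex.add_re, Complex.add_im, Complex.sub_re, Complex.sub_im, Complex.mul_re, Complex.mul_im,
      Complex.neg_re, Complex.neg_im, Complex.ofReal_re, Complex.ofReal_im,
      Complex.conj_re, Complex.conj_im, Complex.zero_re, Complex.zero_im,
      Complex.one_re, Complex.one_im,
      Complex.div_re, Complex.div_im]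
    norm_num
    simp only [hsre 0 1, hsim 0 1, hsre 0 2, hsim 0 2, hsre 0 3, hsim 0 3, hsre 0 4, hsim 0 4, hsre 0 5, hsim 0 5, hsre 1 2, hsim 1 2, hsre 1 3, hsim 1 3, hsre 1 4, hsim 1 4, hsre 1 5, hsim 1 5, hsre 2 3, hsim 2 3, hsre 2 4, hsim 2 4, hsre 2 5, hsim 2 5, hsre 3 4, hsim 3 4, hsre 3 5, hsim 3 5, hsre 4 5, hsim 4 5, hdim 0, hdim 1, hdim 2, hdim 3, hdim 4, hdim 5]
    ring
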